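/- The sl₃ generator τ₁ = X₂Y₂(X₃Y₃ + X₂(Y₂+Y₃) + X₁(Y₁+Y₂+Y₃)) / ((X₂Y₂ + X₁(Y₁+Y₂))(X₃Y₃ + X₂(Y₂+Y₃))) is annihilated by the operator D_X = X₁(X₁+2X₂+2X₃)∂/∂X₁ + X₂(X₂+2X₃)∂/∂X₂ + X₃²∂/∂X₃ − Y₁(X₂+X₃)∂/∂Y₁ − Y₂X₃∂/∂Y₂. -/

import Mathlib

lemma hasDerivAt_quad (a b c x : ℝ) :
    HasDerivAt (fun t : ℝ => a + b * t + c * t ^ 2) (b + 2 * c * x) x := by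
  have h1 : HasDerivAt (fun t : ℝ => b * t) b x := by
    simpa using (hasDerivAt_id x).const_mul b
  have h2 : HasDerivAt (fun t : ℝ => c * t ^ 2) (c * (2 * x)) x := by
    simpa using (hasDerivAt_pow 2 x).const_mul c
  have : HasDerivAt (fun t : ℝ => a + b * t + c * t ^ 2) (b + c * (2 * x)) x :=
    (h1.const_add a).add h2
  convert this using 1
  ring

lemma deriv_quad_div (a b c a' b' c' x : ℝ) (h : a' + b' * x + c' * x ^ 2 ≠ 0) :
    deriv (fun t : ℝ => (a + b * t + c * t ^ 2) / (a' + b' * t + c' * t ^ 2)) x =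
      ((b + 2 * c * x) * (a' + b' * x + c' * x ^ 2)
        - (a + b * x + c * x ^ 2) * (b' + 2 * c' * x)) / (a' + b' * x + c' * x ^ 2) ^ 2 :=
  ((hasDerivAt_quad a b c x).div (hasDerivAt_quad a' b' c' x) h).deriv

/-- The `sl₃` lattice `W`-algebra generator `τ₁`. -/
noncomputable def tauSl3 (x1 x2 x3 y1 y2 y3 : ℝ) : ℝ :=
  x2 * y2 * (x3 * y3 + x2 * (y2 + y3) + x1 * (y1 + y2 + y3)) /
    ((x2 * y2 + x1 * (y1 + y2)) * (x3 * y3 + x2 * (y2 + y3)))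

set_option maxHeartbeats 4000000 in
/-- `τ₁` is annihilated by
`D_X = X₁(X₁+2X₂+2X₃)∂/∂X₁ + X₂(X₂+2X₃)∂/∂X₂ + X₃²∂/∂X₃ − Y₁(X₂+X₃)∂/∂Y₁ − Y₂X₃∂/∂Y₂`. -/
theorem stmt_10 (X1 X2 X3 Y1 Y2 Y3 : ℝ)
    (hA : X2 * Y2 + X1 * (Y1 + Y2) ≠ 0) (hB : X3 * Y3 + X2 * (Y2 + Y3) ≠ 0) :
    X1 * (X1 + 2 * X2 + 2 * X3) * deriv (fun t => tauSl3 t X2 X3 Y1 Y2 Y3) X1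
      + X2 * (X2 + 2 * X3) * deriv (fun t => tauSl3 X1 t X3 Y1 Y2 Y3) X2
      + X3 ^ 2 * deriv (fun t => tauSl3 X1 X2 t Y1 Y2 Y3) X3
      - Y1 * (X2 + X3) * deriv (fun t => tauSl3 X1 X2 X3 t Y2 Y3) Y1
      - Y2 * X3 * deriv (fun t => tauSl3 X1 X2 X3 Y1 t Y3) Y2 = 0 := by
  have hAB : (X2 * Y2 + X1 * (Y1 + Y2)) * (X3 * Y3 + X2 * (Y2 + Y3)) ≠ 0 :=
    mul_ne_zero hA hB
  -- X1
  have e1 : (fun t => tauSl3 t X2 X3 Y1 Y2 Y3) =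
      fun t : ℝ => (X2 * Y2 * (X3 * Y3 + X2 * (Y2 + Y3)) + X2 * Y2 * (Y1 + Y2 + Y3) * t
          + 0 * t ^ 2) /
        (X2 * Y2 * (X3 * Y3 + X2 * (Y2 + Y3))
          + (Y1 + Y2) * (X3 * Y3 + X2 * (Y2 + Y3)) * t + 0 * t ^ 2) := by
    funext t; simp only [tauSl3]; ring
  have h1 : X2 * Y2 * (X3 * Y3 + X2 * (Y2 + Y3))
      + (Y1 + Y2) * (X3 * Y3 + X2 * (Y2 + Y3)) * X1 + 0 * X1 ^ 2 ≠ 0 := by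
    have : X2 * Y2 * (X3 * Y3 + X2 * (Y2 + Y3))
        + (Y1 + Y2) * (X3 * Y3 + X2 * (Y2 + Y3)) * X1 + 0 * X1 ^ 2
        = (X2 * Y2 + X1 * (Y1 + Y2)) * (X3 * Y3 + X2 * (Y2 + Y3)) := by ring
    rw [this]; exact hAB
  -- X2
  have e2 : (fun t => tauSl3 X1 t X3 Y1 Y2 Y3) =
      fun t : ℝ => (0 + Y2 * (X3 * Y3 + X1 * (Y1 + Y2 + Y3)) * t + Y2 * (Y2 + Y3) * t ^ 2) /
        (X1 * (Y1 + Y2) * (X3 * Y3)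
          + (Y2 * X3 * Y3 + X1 * (Y1 + Y2) * (Y2 + Y3)) * t + Y2 * (Y2 + Y3) * t ^ 2) := by
    funext t; simp only [tauSl3]; ring
  have h2 : X1 * (Y1 + Y2) * (X3 * Y3)
      + (Y2 * X3 * Y3 + X1 * (Y1 + Y2) * (Y2 + Y3)) * X2 + Y2 * (Y2 + Y3) * X2 ^ 2 ≠ 0 := by
    have : X1 * (Y1 + Y2) * (X3 * Y3)
        + (Y2 * X3 * Y3 + X1 * (Y1 + Y2) * (Y2 + Y3)) * X2 + Y2 * (Y2 + Y3) * X2 ^ 2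
        = (X2 * Y2 + X1 * (Y1 + Y2)) * (X3 * Y3 + X2 * (Y2 + Y3)) := by ring
    rw [this]; exact hAB
  -- X3
  have e3 : (fun t => tauSl3 X1 X2 t Y1 Y2 Y3) =
      fun t : ℝ => (X2 * Y2 * (X2 * (Y2 + Y3) + X1 * (Y1 + Y2 + Y3))
          + X2 * Y2 * Y3 * t + 0 * t ^ 2) /
        ((X2 * Y2 + X1 * (Y1 + Y2)) * (X2 * (Y2 + Y3))
          + (X2 * Y2 + X1 * (Y1 + Y2)) * Y3 * t + 0 * t ^ 2) := by
    funext t; simp only [tauSl3]; ring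
  have h3 : (X2 * Y2 + X1 * (Y1 + Y2)) * (X2 * (Y2 + Y3))
      + (X2 * Y2 + X1 * (Y1 + Y2)) * Y3 * X3 + 0 * X3 ^ 2 ≠ 0 := by
    have : (X2 * Y2 + X1 * (Y1 + Y2)) * (X2 * (Y2 + Y3))
        + (X2 * Y2 + X1 * (Y1 + Y2)) * Y3 * X3 + 0 * X3 ^ 2
        = (X2 * Y2 + X1 * (Y1 + Y2)) * (X3 * Y3 + X2 * (Y2 + Y3)) := by ring
    rw [this]; exact hAB
  -- Y1
  have e4 : (fun t => tauSl3 X1 X2 X3 t Y2 Y3) =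
      fun t : ℝ => (X2 * Y2 * (X3 * Y3 + X2 * (Y2 + Y3) + X1 * (Y2 + Y3))
          + X2 * Y2 * X1 * t + 0 * t ^ 2) /
        ((X2 * Y2 + X1 * Y2) * (X3 * Y3 + X2 * (Y2 + Y3))
          + X1 * (X3 * Y3 + X2 * (Y2 + Y3)) * t + 0 * t ^ 2) := by
    funext t; simp only [tauSl3]; ring
  have h4 : (X2 * Y2 + X1 * Y2) * (X3 * Y3 + X2 * (Y2 + Y3))
      + X1 * (X3 * Y3 + X2 * (Y2 + Y3)) * Y1 + 0 * Y1 ^ 2 ≠ 0 := by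
    have : (X2 * Y2 + X1 * Y2) * (X3 * Y3 + X2 * (Y2 + Y3))
        + X1 * (X3 * Y3 + X2 * (Y2 + Y3)) * Y1 + 0 * Y1 ^ 2
        = (X2 * Y2 + X1 * (Y1 + Y2)) * (X3 * Y3 + X2 * (Y2 + Y3)) := by ring
    rw [this]; exact hAB
  -- Y2
  have e5 : (fun t => tauSl3 X1 X2 X3 Y1 t Y3) =
      fun t : ℝ => (0 + X2 * (X3 * Y3 + X2 * Y3 + X1 * (Y1 + Y3)) * t
          + X2 * (X2 + X1) * t ^ 2) /
        (X1 * Y1 * (X3 * Y3 + X2 * Y3)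
          + (X1 * Y1 * X2 + (X2 + X1) * (X3 * Y3 + X2 * Y3)) * t
          + (X2 + X1) * X2 * t ^ 2) := by
    funext t; simp only [tauSl3]; ring
  have h5 : X1 * Y1 * (X3 * Y3 + X2 * Y3)
      + (X1 * Y1 * X2 + (X2 + X1) * (X3 * Y3 + X2 * Y3)) * Y2
      + (X2 + X1) * X2 * Y2 ^ 2 ≠ 0 := by
    have : X1 * Y1 * (X3 * Y3 + X2 * Y3)
        + (X1 * Y1 * X2 + (X2 + X1) * (X3 * Y3 + X2 * Y3)) * Y2
        + (X2 + X1) * X2 * Y2 ^ 2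
        = (X2 * Y2 + X1 * (Y1 + Y2)) * (X3 * Y3 + X2 * (Y2 + Y3)) := by ring
    rw [this]; exact hAB
  rw [e1, deriv_quad_div _ _ _ _ _ _ _ h1,
      e2, deriv_quad_div _ _ _ _ _ _ _ h2,
      e3, deriv_quad_div _ _ _ _ _ _ _ h3,
      e4, deriv_quad_div _ _ _ _ _ _ _ h4,
      e5, deriv_quad_div _ _ _ _ _ _ _ h5]
  rw [show X2 * Y2 * (X3 * Y3 + X2 * (Y2 + Y3))
      + (Y1 + Y2) * (X3 * Y3 + X2 * (Y2 + Y3)) * X1 + 0 * X1 ^ 2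
      = (X2 * Y2 + X1 * (Y1 + Y2)) * (X3 * Y3 + X2 * (Y2 + Y3)) from by ring,
    show X1 * (Y1 + Y2) * (X3 * Y3)
      + (Y2 * X3 * Y3 + X1 * (Y1 + Y2) * (Y2 + Y3)) * X2 + Y2 * (Y2 + Y3) * X2 ^ 2
      = (X2 * Y2 + X1 * (Y1 + Y2)) * (X3 * Y3 + X2 * (Y2 + Y3)) from by ring,
    show (X2 * Y2 + X1 * (Y1 + Y2)) * (X2 * (Y2 + Y3))
      + (X2 * Y2 + X1 * (Y1 + Y2)) * Y3 * X3 + 0 * X3 ^ 2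
      = (X2 * Y2 + X1 * (Y1 + Y2)) * (X3 * Y3 + X2 * (Y2 + Y3)) from by ring,
    show (X2 * Y2 + X1 * Y2) * (X3 * Y3 + X2 * (Y2 + Y3))
      + X1 * (X3 * Y3 + X2 * (Y2 + Y3)) * Y1 + 0 * Y1 ^ 2
      = (X2 * Y2 + X1 * (Y1 + Y2)) * (X3 * Y3 + X2 * (Y2 + Y3)) from by ring,
    show X1 * Y1 * (X3 * Y3 + X2 * Y3)
      + (X1 * Y1 * X2 + (X2 + X1) * (X3 * Y3 + X2 * Y3)) * Y2
      + (X2 + X1) * X2 * Y2 ^ 2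
      = (X2 * Y2 + X1 * (Y1 + Y2)) * (X3 * Y3 + X2 * (Y2 + Y3)) from by ring]
  simp only [mul_div_assoc']
  rw [← add_div, ← add_div, div_sub_div_same, div_sub_div_same,
    div_eq_zero_iff]
  left
  ring
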